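/- arXiv:2109.03208 — 6 statements merged into one kernel-verified Lean document; each statement's English description precedes it below -/
import Mathlib

section
/- Let V be a finite-dimensional real inner product space, U ⊆ V convex and compact (not a singleton), X a set, f : X × U → ℝ affine in the second argument, and p̂ ∈ relint(U). A robustly optimal x* ∈ X is Pareto robustly optimal (i.e., no y ∈ X Pareto dominates it) if and only if x* is an optimal solution of the problem: maximize f(y,p̂) over y ∈ X subject to f(y,p) ≥ f(x*,p) for all p ∈ U. -/
open Set

lemma relint_combo {V : Type*} [NormedAddCommGroup V] [InnerProductSpace ℝ V]
    {U : Set V} {phat pbar : V}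
    (hphat : phat ∈ intrinsicInterior ℝ U) (hpbar : pbar ∈ U) :
    ∃ p ∈ U, ∃ ε : ℝ, 0 < ε ∧ ε < 1 ∧ phat = ε • pbar + (1 - ε) • p := by
  obtain ⟨x, hxint, hx⟩ := mem_intrinsicInterior.1 hphat
  have hphatU : phat ∈ U := intrinsicInterior_subset hphat
  have hphatS : phat ∈ affineSpan ℝ U := subset_affineSpan ℝ U hphatU
  have hpbarS : pbar ∈ affineSpan ℝ U := subset_affineSpan ℝ U hpbar
  -- curve γ t = pbar + t • (phat - pbar), valued in the affine span
  have hmem : ∀ t : ℝ, pbar + t • (phat - pbar) ∈ affineSpan ℝ U := by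
    intro t
    have := AffineSubspace.smul_vsub_vadd_mem (affineSpan ℝ U) t hphatS hpbarS hpbarS
    simpa [vsub_eq_sub, vadd_eq_add, add_comm] using this
  set γ : ℝ → ↥(affineSpan ℝ U) := fun t => ⟨pbar + t • (phat - pbar), hmem t⟩ with hγ
  have hcont : Continuous γ := by
    apply Continuous.subtype_mk
    continuity
  have hγ1 : γ 1 = x := by
    apply Subtype.ext
    simp [hγ, hx]
  have hopen : IsOpen (γ ⁻¹' interior ((↑) ⁻¹' U : Set <| affineSpan ℝ U)) :=
    isOpen_interior.preimage hcont
  have h1 : (1 : ℝ) ∈ γ ⁻¹' interior ((↑) ⁻¹' U : Set <| affineSpan ℝ U) := by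
    simp [mem_preimage, hγ1, hxint]
  obtain ⟨δ, hδpos, hδ⟩ := Metric.isOpen_iff.1 hopen 1 h1
  set t := 1 + δ / 2 with ht
  have htmem : t ∈ γ ⁻¹' interior ((↑) ⁻¹' U : Set <| affineSpan ℝ U) := by
    apply hδ
    rw [Metric.mem_ball, Real.dist_eq, ht]
    rw [abs_of_pos (by linarith)]
    linarith
  have hγt : γ t ∈ interior ((↑) ⁻¹' U : Set <| affineSpan ℝ U) := htmem
  have hpU' : γ t ∈ ((↑) ⁻¹' U : Set <| affineSpan ℝ U) := interior_subset hγt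
  have hpU : pbar + t • (phat - pbar) ∈ U := hpU'
  refine ⟨pbar + t • (phat - pbar), hpU, (δ/2) / (1 + δ/2), ?_, ?_, ?_⟩
  · positivity
  · rw [div_lt_one (by positivity)]; linarith
  · have h0 : (1 : ℝ) + δ/2 ≠ 0 := by positivity
    field_simp
    match_scalars <;> field_simp <;> ring

/-- A robustly optimal `x*` is Pareto robustly optimal iff it is
optimal for the auxiliary problem `max f(y,p̂) s.t. f(y,·) ≥ f(x*,·) on U`. -/
theorem pro_iff_optimal_aux
    {V : Type*} [NormedAddCommGroup V] [InnerProductSpace ℝ V] [FiniteDimensional ℝ V]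
    {X : Type*} (U : Set V) (hUconv : Convex ℝ U) (hUcomp : IsCompact U)
    (hUnotsingleton : ∀ p : V, U ≠ {p})
    (f : X → V → ℝ)
    (haff : ∀ x : X, ∃ g : V →ᵃ[ℝ] ℝ, ∀ p ∈ U, f x p = g p)
    (phat : V) (hphat : phat ∈ intrinsicInterior ℝ U)
    (xstar : X)
    (hRO : ∀ x : X, sInf (f x '' U) ≤ sInf (f xstar '' U)) :
    (¬ ∃ y : X, (∀ p ∈ U, f xstar p ≤ f y p) ∧ ∃ pbar ∈ U, f xstar pbar < f y pbar)
      ↔ (∀ y : X, (∀ p ∈ U, f xstar p ≤ f y p) → f y phat ≤ f xstar phat) := by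
  have hphatU : phat ∈ U := intrinsicInterior_subset hphat
  constructor
  · intro hnp y hy
    by_contra h
    push_neg at h
    exact hnp ⟨y, hy, phat, hphatU, h⟩
  · rintro hopt ⟨y, hy, pbar, hpbarU, hlt⟩
    obtain ⟨p, hpU, ε, hε0, hε1, hcomb⟩ := relint_combo hphat hpbarU
    obtain ⟨gx, hgx⟩ := haff xstar
    obtain ⟨gy, hgy⟩ := haff y
    have hl : phat = AffineMap.lineMap p pbar ε := by
      rw [hcomb, AffineMap.lineMap_apply]
      simp only [vsub_eq_sub, vadd_eq_add]
      module
    have hx : f xstar phat = f xstar p + ε * (f xstar pbar - f xstar p) := by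
      rw [hgx _ hphatU, hgx _ hpU, hgx _ hpbarU, hl, AffineMap.apply_lineMap,
        AffineMap.lineMap_apply]
      simp [smul_eq_mul]
      ring
    have hy' : f y phat = f y p + ε * (f y pbar - f y p) := by
      rw [hgy _ hphatU, hgy _ hpU, hgy _ hpbarU, hl, AffineMap.apply_lineMap,
        AffineMap.lineMap_apply]
      simp [smul_eq_mul]
      ring
    nlinarith [hopt y hy, hy p hpU, hlt, hε0, hε1]
end

section
/- Let V be a finite-dimensional real inner product space, U ⊆ V convex and compact, X a set, f : X × U → ℝ affine in the second argument, p̂ ∈ relint(U), and x* robustly optimal. Any optimal solution y* of the problem 'maximize f(y,p̂) over y ∈ X subject to f(y,p) ≥ f(x*,p) for all p ∈ U' is Pareto robustly optimal. -/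
open Set

/-- From a relative interior point one can move slightly beyond, away from any
point of the set, while staying in the set. -/
lemma exists_beyond {V : Type*} [NormedAddCommGroup V] [InnerProductSpace ℝ V] [FiniteDimensional ℝ V]
    {U : Set V} {phat pbar : V} (hphat : phat ∈ intrinsicInterior ℝ U)
    (hpbar : pbar ∈ U) :
    ∃ t : ℝ, 1 < t ∧ AffineMap.lineMap pbar phat t ∈ U := by
  obtain ⟨y, hy, hyeq⟩ := mem_intrinsicInterior.mp hphat
  have hpbar' : pbar ∈ affineSpan ℝ U := subset_affineSpan ℝ U hpbar
  have hphat' : phat ∈ affineSpan ℝ U := by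
    rw [← hyeq]; exact y.2
  have hmemline : ∀ t : ℝ, AffineMap.lineMap pbar phat t ∈ affineSpan ℝ U := by
    intro t
    have := AffineSubspace.smul_vsub_vadd_mem (affineSpan ℝ U) t hphat' hpbar' hpbar'
    simpa [AffineMap.lineMap_apply] using this
  set L : ℝ → affineSpan ℝ U := fun t => ⟨AffineMap.lineMap pbar phat t, hmemline t⟩ with hL
  have hLcont : Continuous L := by
    exact Continuous.subtype_mk (AffineMap.lineMap_continuous) _
  have hL1 : L 1 = y := by
    apply Subtype.ext
    simp [hL, hyeq]
  have hmem : L ⁻¹' (interior (((↑) : affineSpan ℝ U → V) ⁻¹' U)) ∈ nhds (1 : ℝ) := by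
    apply hLcont.continuousAt.preimage_mem_nhds
    exact isOpen_interior.mem_nhds (hL1 ▸ hy)
  have hmem' : L ⁻¹' (interior (((↑) : affineSpan ℝ U → V) ⁻¹' U)) ∈ nhdsWithin (1:ℝ) (Ioi 1) :=
    nhdsWithin_le_nhds hmem
  obtain ⟨t, ht⟩ := Filter.nonempty_of_mem (Filter.inter_mem hmem' self_mem_nhdsWithin)
  have : L t ∈ ((↑) : affineSpan ℝ U → V) ⁻¹' U := interior_subset ht.1
  exact ⟨t, ht.2, this⟩

/-- Any optimal solution of the auxiliary problem
`max f(y,p̂) s.t. f(y,·) ≥ f(x*,·) on U` is Pareto robustly optimal. -/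
theorem aux_optimal_is_pro
    {V : Type*} [NormedAddCommGroup V] [InnerProductSpace ℝ V] [FiniteDimensional ℝ V]
    {X : Type*} (U : Set V) (hUconv : Convex ℝ U) (hUcomp : IsCompact U)
    (f : X → V → ℝ)
    (haff : ∀ x : X, ∃ g : V →ᵃ[ℝ] ℝ, ∀ p ∈ U, f x p = g p)
    (phat : V) (hphat : phat ∈ intrinsicInterior ℝ U)
    (xstar : X)
    (hRO : ∀ x : X, sInf (f x '' U) ≤ sInf (f xstar '' U))
    (ystar : X)
    (hfeas : ∀ p ∈ U, f xstar p ≤ f ystar p)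
    (hopt : ∀ y : X, (∀ p ∈ U, f xstar p ≤ f y p) → f y phat ≤ f ystar phat) :
    (∀ x : X, sInf (f x '' U) ≤ sInf (f ystar '' U)) ∧
      ¬ ∃ y : X, (∀ p ∈ U, f ystar p ≤ f y p) ∧ ∃ pbar ∈ U, f ystar pbar < f y pbar := by
  have hUne : U.Nonempty := ⟨phat, intrinsicInterior_subset hphat⟩
  have hphatU : phat ∈ U := intrinsicInterior_subset hphat
  have hbdd : ∀ x : X, BddBelow (f x '' U) := by
    intro x
    obtain ⟨g, hg⟩ := haff x
    have himg : f x '' U = g '' U := by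
      apply image_congr
      intro p hp; exact hg p hp
    rw [himg]
    exact (hUcomp.image g.continuous_of_finiteDimensional).bddBelow
  constructor
  · intro x
    refine (hRO x).trans ?_
    apply le_csInf (hUne.image _)
    rintro b ⟨p, hp, rfl⟩
    exact (csInf_le (hbdd xstar) ⟨p, hp, rfl⟩).trans (hfeas p hp)
  · rintro ⟨y, hdom, pbar, hpbarU, hlt⟩
    -- y is feasible for the auxiliary problem
    have hyfeas : ∀ p ∈ U, f xstar p ≤ f y p := fun p hp =>
      (hfeas p hp).trans (hdom p hp)
    have heq : f y phat = f ystar phat :=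
      le_antisymm (hopt y hyfeas) (hdom phat hphatU)
    obtain ⟨gy, hgy⟩ := haff y
    obtain ⟨gs, hgs⟩ := haff ystar
    set h : V →ᵃ[ℝ] ℝ := gy - gs with hh
    have hval : ∀ p ∈ U, h p = f y p - f ystar p := by
      intro p hp
      simp [hh, ← hgy p hp, ← hgs p hp]
    have hnonneg : ∀ p ∈ U, 0 ≤ h p := by
      intro p hp
      rw [hval p hp]
      exact sub_nonneg.mpr (hdom p hp)
    have hzero : h phat = 0 := by
      rw [hval phat hphatU, heq, sub_self]
    have hpos : 0 < h pbar := by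
      rw [hval pbar hpbarU]
      exact sub_pos.mpr hlt
    obtain ⟨t, ht1, htU⟩ := exists_beyond hphat hpbarU
    have := hnonneg _ htU
    rw [AffineMap.apply_lineMap] at this
    rw [AffineMap.lineMap_apply_module, hzero, smul_zero, add_zero, smul_eq_mul] at this
    nlinarith
end

section
/- Let V be a finite-dimensional real inner product space, U ⊆ V convex and compact, X a set, f : X × U → ℝ affine in the second argument, and p̂ ∈ relint(U). If x* maximizes x ↦ f(x,p̂) over the set X^RO of robustly optimal solutions, then x* is Pareto robustly optimal. -/
open Set

/-- If `phat` is in the intrinsic interior of `U` and `pbar ∈ U`, then `phat` lies strictly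
between `pbar` and some point `p ∈ U`. -/
lemma exists_extend_beyond {V : Type*} [NormedAddCommGroup V] [InnerProductSpace ℝ V]
    {U : Set V} {phat pbar : V} (h : phat ∈ intrinsicInterior ℝ U) (hb : pbar ∈ U) :
    ∃ p ∈ U, ∃ ε : ℝ, 0 < ε ∧ ε < 1 ∧ phat = AffineMap.lineMap pbar p ε := by
  rw [mem_intrinsicInterior] at h
  obtain ⟨q, hq, hqeq⟩ := h
  have hbspan : pbar ∈ affineSpan ℝ U := subset_affineSpan ℝ U hb
  have hpspan : phat ∈ affineSpan ℝ U := hqeq ▸ q.2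
  -- the curve t ↦ pbar + t • (phat - pbar), lifted to the affine span
  have hcmem : ∀ t : ℝ, AffineMap.lineMap pbar phat t ∈ affineSpan ℝ U := fun t =>
    AffineMap.lineMap_mem t hbspan hpspan
  set C : ℝ → affineSpan ℝ U := fun t => ⟨AffineMap.lineMap pbar phat t, hcmem t⟩ with hC
  have hCcont : Continuous C := by
    apply Continuous.subtype_mk
    exact (AffineMap.lineMap pbar phat : ℝ →ᵃ[ℝ] V).continuous_of_finiteDimensional
  have hC1 : C 1 = q := by
    apply Subtype.ext
    simp [hC, hqeq]
  have hopen : IsOpen (C ⁻¹' interior (((↑) : affineSpan ℝ U → V) ⁻¹' U)) :=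
    isOpen_interior.preimage hCcont
  have h1mem : (1 : ℝ) ∈ C ⁻¹' interior (((↑) : affineSpan ℝ U → V) ⁻¹' U) := by
    simp [mem_preimage, hC1, hq]
  obtain ⟨δ, hδpos, hδ⟩ := Metric.isOpen_iff.1 hopen 1 h1mem
  set t : ℝ := 1 + δ / 2 with ht
  have htmem : t ∈ Metric.ball (1 : ℝ) δ := by
    simp only [Metric.mem_ball, ht, Real.dist_eq]
    rw [add_sub_cancel_left, abs_of_pos (by linarith)]
    linarith
  have htU' : C t ∈ interior (((↑) : affineSpan ℝ U → V) ⁻¹' U) := hδ htmem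
  have htU : (AffineMap.lineMap pbar phat t : V) ∈ U :=
    interior_subset (s := (((↑) : affineSpan ℝ U → V) ⁻¹' U)) htU'
  have ht1 : 1 < t := by simp [ht]; linarith
  have ht0 : t ≠ 0 := by linarith
  refine ⟨AffineMap.lineMap pbar phat t, htU, 1 / t, by positivity, by
    rw [div_lt_one (by linarith)]; linarith, ?_⟩
  have hne : t ≠ 0 := ht0
  simp only [AffineMap.lineMap_apply_module]
  match_scalars <;> field_simp <;> ring

/-- A maximizer of `x ↦ f(x,p̂)` over the set of robustly optimal
solutions, for `p̂ ∈ relint U`, is Pareto robustly optimal. -/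
theorem argmax_over_XRO_is_pro
    {V : Type*} [NormedAddCommGroup V] [InnerProductSpace ℝ V] [FiniteDimensional ℝ V]
    {X : Type*} (U : Set V) (hUconv : Convex ℝ U) (hUcomp : IsCompact U)
    (f : X → V → ℝ)
    (haff : ∀ x : X, ∃ g : V →ᵃ[ℝ] ℝ, ∀ p ∈ U, f x p = g p)
    (phat : V) (hphat : phat ∈ intrinsicInterior ℝ U)
    (XRO : Set X)
    (hXRO : XRO = {x : X | ∀ x' : X, sInf (f x' '' U) ≤ sInf (f x '' U)})
    (xstar : X) (hmem : xstar ∈ XRO)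
    (hmax : ∀ x ∈ XRO, f x phat ≤ f xstar phat) :
    xstar ∈ XRO ∧
      ¬ ∃ y : X, (∀ p ∈ U, f xstar p ≤ f y p) ∧ ∃ pbar ∈ U, f xstar pbar < f y pbar := by
  have hphatU : phat ∈ U := intrinsicInterior_subset hphat
  have hUne : U.Nonempty := ⟨phat, hphatU⟩
  -- each f x is bounded below on U
  have hbdd : ∀ x : X, BddBelow (f x '' U) := by
    intro x
    obtain ⟨g, hg⟩ := haff x
    have : f x '' U = g '' U := Set.image_congr hg
    rw [this]
    exact (hUcomp.image g.continuous_of_finiteDimensional).bddBelow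
  refine ⟨hmem, ?_⟩
  rintro ⟨y, hdom, pbar, hpbarU, hlt⟩
  -- y is also robustly optimal
  have hyRO : y ∈ XRO := by
    rw [hXRO]
    intro x'
    have h1 : sInf (f x' '' U) ≤ sInf (f xstar '' U) := by
      rw [hXRO] at hmem; exact hmem x'
    refine h1.trans (le_csInf (hUne.image _) ?_)
    rintro b ⟨p, hp, rfl⟩
    exact (csInf_le (hbdd xstar) ⟨p, hp, rfl⟩).trans (hdom p hp)
  have hy := hmax y hyRO
  obtain ⟨p, hpU, ε, hε0, hε1, hline⟩ := exists_extend_beyond hphat hpbarU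
  obtain ⟨gx, hgx⟩ := haff xstar
  obtain ⟨gy, hgy⟩ := haff y
  have key : ∀ (g : V →ᵃ[ℝ] ℝ), g phat = (1 - ε) * g pbar + ε * g p := by
    intro g
    rw [hline, AffineMap.apply_lineMap, AffineMap.lineMap_apply_module]
    simp [smul_eq_mul]
  have hxeq : f xstar phat = (1 - ε) * f xstar pbar + ε * f xstar p := by
    rw [hgx phat hphatU, hgx pbar hpbarU, hgx p hpU, key]
  have hyeq : f y phat = (1 - ε) * f y pbar + ε * f y p := by
    rw [hgy phat hphatU, hgy pbar hpbarU, hgy p hpU, key]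
  have hp' : f xstar p ≤ f y p := hdom p hpU
  nlinarith [hy, hlt, hp', hxeq, hyeq]
end

section
/- In the setting of the robust quadratic knapsack problem with R(p) = 𝟙𝟙ᵀ + E_{11}(p₁−1) + E_{22}(p₁−1) + E_{12}(p₂−1), U = {p ∈ ℝ² : p₁ ≥ 1, p₁² ≤ p₂, p₂ ≤ 4}, feasible set X = {x ∈ {0,1}^n : 𝟙ᵀx ≤ 5}, n ≥ 5: the solution x* = (1,1,1,1,1,0,…,0)ᵀ is Pareto robustly optimal; in particular, any x ∈ X with x₁ = x₂ = 1 and 𝟙ᵀx = 5 Pareto dominates every robustly optimal x ∈ X with x₁ = 0 or x₂ = 0. -/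
open Matrix

lemma std_quad {n : ℕ} (i : Fin n) (j : Fin n) (x : Fin n → ℝ) :
    x ⬝ᵥ (Matrix.single i j (1:ℝ)).mulVec x = x i * x j := by
  simp [Matrix.mulVec, dotProduct, Matrix.single, Finset.mul_sum, mul_ite,
    Finset.sum_ite_eq, Finset.sum_ite_eq', ite_and]

lemma ones_quad {n : ℕ} (x : Fin n → ℝ) :
    x ⬝ᵥ (Matrix.of fun _ _ => (1:ℝ)).mulVec x = (∑ k, x k)^2 := by
  simp [Matrix.mulVec, dotProduct, ← Finset.sum_mul, sq]

lemma quad_formula {n : ℕ} (h0 : 0 < n) (h1 : 1 < n) (p : Fin 2 → ℝ) (x : Fin n → ℝ) :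
    x ⬝ᵥ ((Matrix.of fun _ _ => (1:ℝ))
        + (p 0 - 1) • Matrix.single (⟨0, h0⟩ : Fin n) (⟨0, h0⟩ : Fin n) (1:ℝ)
        + (p 0 - 1) • Matrix.single (⟨1, h1⟩ : Fin n) (⟨1, h1⟩ : Fin n) (1:ℝ)
        + (p 1 - 1) • ((1/2 : ℝ) •
            (Matrix.single (⟨0, h0⟩ : Fin n) (⟨1, h1⟩ : Fin n) (1:ℝ)
              + Matrix.single (⟨1, h1⟩ : Fin n) (⟨0, h0⟩ : Fin n) (1:ℝ)))).mulVec x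
    = (∑ k, x k)^2 + (p 0 - 1) * ((x ⟨0, h0⟩)^2 + (x ⟨1, h1⟩)^2)
        + (p 1 - 1) * (x ⟨0, h0⟩ * x ⟨1, h1⟩) := by
  simp only [Matrix.add_mulVec, Matrix.smul_mulVec, dotProduct_add, dotProduct_smul,
    std_quad, ones_quad, smul_eq_mul]
  ring

set_option maxHeartbeats 2000000 in
/-- In the robust quadratic knapsack example (indices 1,2 encoded as
`0, 1 : Fin n`), the solution `x* = (1,1,1,1,1,0,…,0)` is Pareto robustly optimal;
moreover any feasible `x` with `x₁ = x₂ = 1` and `𝟙ᵀx = 5` Pareto dominates every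
robustly optimal feasible `x` with `x₁ = 0` or `x₂ = 0`. -/
theorem knapsack_pro
    {n : ℕ} (hn : 5 ≤ n)
    (R : (Fin 2 → ℝ) → Matrix (Fin n) (Fin n) ℝ)
    (hR : ∀ p, R p = (Matrix.of fun _ _ => (1:ℝ))
        + (p 0 - 1) • Matrix.single (⟨0, by omega⟩ : Fin n) (⟨0, by omega⟩ : Fin n) (1:ℝ)
        + (p 0 - 1) • Matrix.single (⟨1, by omega⟩ : Fin n) (⟨1, by omega⟩ : Fin n) (1:ℝ)
        + (p 1 - 1) • ((1/2 : ℝ) •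
            (Matrix.single (⟨0, by omega⟩ : Fin n) (⟨1, by omega⟩ : Fin n) (1:ℝ)
              + Matrix.single (⟨1, by omega⟩ : Fin n) (⟨0, by omega⟩ : Fin n) (1:ℝ))))
    (U : Set (Fin 2 → ℝ))
    (hU : U = {p : Fin 2 → ℝ | 1 ≤ p 0 ∧ (p 0)^2 ≤ p 1 ∧ p 1 ≤ 4})
    (Xset : Set (Fin n → ℝ))
    (hXset : Xset = {x : Fin n → ℝ | (∀ k, x k = 0 ∨ x k = 1) ∧ ∑ k, x k ≤ 5})
    (xstar : Fin n → ℝ) (hxstar : ∀ k : Fin n, xstar k = if (k : ℕ) < 5 then (1:ℝ) else 0) :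
    -- x* is Pareto robustly optimal
    (xstar ∈ Xset
      ∧ (∀ y ∈ Xset, sInf {v : ℝ | ∃ p ∈ U, v = y ⬝ᵥ (R p).mulVec y}
            ≤ sInf {v : ℝ | ∃ p ∈ U, v = xstar ⬝ᵥ (R p).mulVec xstar})
      ∧ ¬ ∃ y ∈ Xset, (∀ p ∈ U, xstar ⬝ᵥ (R p).mulVec xstar ≤ y ⬝ᵥ (R p).mulVec y)
            ∧ ∃ pbar ∈ U, xstar ⬝ᵥ (R pbar).mulVec xstar < y ⬝ᵥ (R pbar).mulVec y)
    ∧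
    -- any feasible x with x₁ = x₂ = 1 and 𝟙ᵀx = 5 dominates every robustly optimal
    -- feasible x' with x'₁ = 0 or x'₂ = 0
    (∀ x ∈ Xset, x ⟨0, by omega⟩ = 1 → x ⟨1, by omega⟩ = 1 → ∑ k, x k = 5 →
      ∀ x' ∈ Xset,
        (∀ y ∈ Xset, sInf {v : ℝ | ∃ p ∈ U, v = y ⬝ᵥ (R p).mulVec y}
            ≤ sInf {v : ℝ | ∃ p ∈ U, v = x' ⬝ᵥ (R p).mulVec x'}) →
        (x' ⟨0, by omega⟩ = 0 ∨ x' ⟨1, by omega⟩ = 0) →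
        ((∀ p ∈ U, x' ⬝ᵥ (R p).mulVec x' ≤ x ⬝ᵥ (R p).mulVec x)
          ∧ ∃ pbar ∈ U, x' ⬝ᵥ (R pbar).mulVec x' < x ⬝ᵥ (R pbar).mulVec x)) := by
  have h0 : 0 < n := by omega
  have h1 : 1 < n := by omega
  set i0 : Fin n := ⟨0, h0⟩ with hi0
  set i1 : Fin n := ⟨1, h1⟩ with hi1
  -- the quadratic form
  have hf : ∀ (x : Fin n → ℝ) (p : Fin 2 → ℝ),
      x ⬝ᵥ (R p).mulVec x
        = (∑ k, x k)^2 + (p 0 - 1) * ((x i0)^2 + (x i1)^2)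
            + (p 1 - 1) * (x i0 * x i1) := by
    intro x p
    rw [hR p]
    exact quad_formula h0 h1 p x
  -- membership facts about U
  have hp11 : (fun _ => (1:ℝ)) ∈ U := by
    rw [hU]; norm_num
  have hpbar : (![2, 4] : Fin 2 → ℝ) ∈ U := by
    rw [hU]; norm_num
  -- nonnegativity of binary
  have hbin : ∀ (x : Fin n → ℝ), (∀ k, x k = 0 ∨ x k = 1) →
      ∀ k, 0 ≤ x k ∧ x k ≤ 1 := by
    intro x hx k; rcases hx k with h | h <;> simp [h]
  have hsumnn : ∀ (x : Fin n → ℝ), (∀ k, x k = 0 ∨ x k = 1) → 0 ≤ ∑ k, x k := by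
    intro x hx
    exact Finset.sum_nonneg fun k _ => (hbin x hx k).1
  -- lower bound on quadratic form over U
  have hlow : ∀ (x : Fin n → ℝ), (∀ k, x k = 0 ∨ x k = 1) →
      ∀ p ∈ U, (∑ k, x k)^2 ≤ x ⬝ᵥ (R p).mulVec x := by
    intro x hx p hp
    rw [hU] at hp
    obtain ⟨hp0, hp1, hp2⟩ := hp
    rw [hf]
    have h0' := hbin x hx i0
    have h1' := hbin x hx i1
    have hp1' : (1:ℝ) ≤ p 1 := by nlinarith
    have t1 : 0 ≤ (p 0 - 1) * ((x i0)^2 + (x i1)^2) :=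
      mul_nonneg (by linarith) (by positivity)
    have t2 : 0 ≤ (p 1 - 1) * (x i0 * x i1) :=
      mul_nonneg (by linarith) (mul_nonneg h0'.1 h1'.1)
    linarith
  -- the worst case value
  have hval : ∀ (x : Fin n → ℝ), x ⬝ᵥ (R (fun _ => (1:ℝ))).mulVec x = (∑ k, x k)^2 := by
    intro x; rw [hf]; ring
  have hmem : ∀ (x : Fin n → ℝ),
      (∑ k, x k)^2 ∈ {v : ℝ | ∃ p ∈ U, v = x ⬝ᵥ (R p).mulVec x} := by
    intro x; exact ⟨fun _ => 1, hp11, (hval x).symm⟩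
  -- the inf value
  have hsinf : ∀ (x : Fin n → ℝ), (∀ k, x k = 0 ∨ x k = 1) →
      sInf {v : ℝ | ∃ p ∈ U, v = x ⬝ᵥ (R p).mulVec x} = (∑ k, x k)^2 := by
    intro x hx
    have hlb : ∀ v ∈ {v : ℝ | ∃ p ∈ U, v = x ⬝ᵥ (R p).mulVec x}, (∑ k, x k)^2 ≤ v := by
      rintro v ⟨p, hp, rfl⟩
      exact hlow x hx p hp
    exact le_antisymm (csInf_le ⟨_, hlb⟩ (hmem x)) (le_csInf ⟨_, hmem x⟩ hlb)
  -- facts about xstar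
  have hxbinstar : ∀ k, xstar k = 0 ∨ xstar k = 1 := by
    intro k; rw [hxstar k]; split <;> simp
  have hsumstar : ∑ k, xstar k = 5 := by
    have : ∀ k : Fin n, xstar k = if (k : ℕ) ∈ Finset.range 5 then (1:ℝ) else 0 := by
      intro k; rw [hxstar k]; simp
    rw [Finset.sum_congr rfl (fun k _ => this k)]
    rw [Fin.sum_univ_eq_sum_range (fun i => if i ∈ Finset.range 5 then (1:ℝ) else 0) n]
    rw [Finset.sum_ite_mem]
    have : Finset.range n ∩ Finset.range 5 = Finset.range 5 := by
      ext a; simp; omega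
    rw [this]
    simp
  have hxstar0 : xstar i0 = 1 := by rw [hxstar]; norm_num [hi0]
  have hxstar1 : xstar i1 = 1 := by rw [hxstar]; norm_num [hi1]
  have hxstarX : xstar ∈ Xset := by
    rw [hXset]; exact ⟨hxbinstar, le_of_eq hsumstar⟩
  -- sum = 5 from robust optimality
  have hsum5 : ∀ (x' : Fin n → ℝ), x' ∈ Xset →
      (25:ℝ) ≤ sInf {v : ℝ | ∃ p ∈ U, v = x' ⬝ᵥ (R p).mulVec x'} → ∑ k, x' k = 5 := by
    intro x' hx' hge
    rw [hXset] at hx'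
    rw [hsinf x' hx'.1] at hge
    have hnn := hsumnn x' hx'.1
    nlinarith [hx'.2]
  constructor
  · refine ⟨hxstarX, ?_, ?_⟩
    · intro y hy
      rw [hXset] at hy
      rw [hsinf y hy.1, hsinf xstar hxbinstar, hsumstar]
      have := hsumnn y hy.1
      nlinarith [hy.2]
    · rintro ⟨y, hy, hdom, pbar, hpbarU, hstrict⟩
      rw [hXset] at hy
      have hd11 := hdom (fun _ => 1) hp11
      rw [hval, hval, hsumstar] at hd11
      have hy5 : ∑ k, y k = 5 := by
        have := hsumnn y hy.1
        nlinarith [hy.2]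
      rw [hf, hf, hsumstar, hy5, hxstar0, hxstar1] at hstrict
      rw [hU] at hpbarU
      obtain ⟨hq0, hq1, hq2⟩ := hpbarU
      have hy0 := hbin y hy.1 i0
      have hy1 := hbin y hy.1 i1
      have hq1' : (1:ℝ) ≤ pbar 1 := by nlinarith
      have hs0 : (y i0)^2 ≤ 1 := by nlinarith [hy0.1, hy0.2]
      have hs1 : (y i1)^2 ≤ 1 := by nlinarith [hy1.1, hy1.2]
      have hm : y i0 * y i1 ≤ 1 := by nlinarith [hy0.1, hy0.2, hy1.1, hy1.2]
      have t1 : (pbar 0 - 1) * ((y i0)^2 + (y i1)^2) ≤ (pbar 0 - 1) * 2 :=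
        mul_le_mul_of_nonneg_left (by linarith) (by linarith)
      have t2 : (pbar 1 - 1) * (y i0 * y i1) ≤ (pbar 1 - 1) * 1 :=
        mul_le_mul_of_nonneg_left hm (by linarith)
      linarith
  · intro x hx hx0 hx1 hxs x' hx' hro hzero
    have hx0' : x i0 = 1 := hx0
    have hx1' : x i1 = 1 := hx1
    have hzero' : x' i0 = 0 ∨ x' i1 = 0 := hzero
    rw [hXset] at hx hx'
    have hx'5 : ∑ k, x' k = 5 := by
      apply hsum5 x' (by rw [hXset]; exact hx')
      have := hro x (by rw [hXset]; exact hx)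
      rw [hsinf x hx.1, hxs] at this
      norm_num at this
      exact this
    have hx'0 := hbin x' hx'.1 i0
    have hx'1 := hbin x' hx'.1 i1
    have hzz : x' i0 * x' i1 = 0 := by
      rcases hzero' with h | h <;> rw [h] <;> ring
    have hs1 : (x' i0)^2 + (x' i1)^2 ≤ 1 := by
      rcases hzero' with h | h
      · rw [h]; nlinarith [hx'1.1, hx'1.2]
      · rw [h]; nlinarith [hx'0.1, hx'0.2]
    constructor
    · intro p hp
      rw [hU] at hp
      obtain ⟨hq0, hq1, hq2⟩ := hp
      rw [hf, hf, hxs, hx'5, hx0', hx1', hzz]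
      have hp1' : (1:ℝ) ≤ p 1 := by nlinarith
      have t1 : (p 0 - 1) * ((x' i0)^2 + (x' i1)^2) ≤ (p 0 - 1) * (1^2 + 1^2) :=
        mul_le_mul_of_nonneg_left (by linarith) (by linarith)
      have t2 : 0 ≤ (p 1 - 1) * (1 * 1 : ℝ) := by nlinarith
      linarith
    · refine ⟨![2, 4], hpbar, ?_⟩
      rw [hf, hf, hxs, hx'5, hx0', hx1', hzz]
      have hb0 : (![2, 4] : Fin 2 → ℝ) 0 = 2 := rfl
      have hb1 : (![2, 4] : Fin 2 → ℝ) 1 = 4 := rfl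
      rw [hb0, hb1]
      nlinarith [hs1]
end

section
/- Let U = {I₂ + μA : μ ∈ [0,1]} where A = [[1,−1],[−1,1]], and let X = {X ∈ S² : X ⪰ 0, Tr(X) = 1}. Then: (1) every X ∈ X is robustly optimal for max_{X∈X} min_{C∈U} ⟨C,X⟩ with robust value 1; (2) X' = ½A Pareto dominates every other X ∈ X, i.e., for every μ ∈ (0,1] and every feasible X ≠ X', ⟨I₂ + μA, X⟩ < ⟨I₂ + μA, X'⟩. -/
open Matrix

/-- For `U = {I₂ + μA : μ ∈ [0,1]}` with `A = [[1,-1],[-1,1]]` and the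
spectrahedron `{X ⪰ 0, Tr X = 1}`: every feasible `X` is robustly optimal with robust
value 1, and `X' = ½A` Pareto dominates every other feasible solution. -/
theorem robust_eigenvalue_example
    (A : Matrix (Fin 2) (Fin 2) ℝ) (hA : A = !![1, -1; -1, 1])
    (U : Set (Matrix (Fin 2) (Fin 2) ℝ))
    (hU : U = {C : Matrix (Fin 2) (Fin 2) ℝ | ∃ μ : ℝ, μ ∈ Set.Icc (0:ℝ) 1 ∧
        C = 1 + μ • A})
    (Xset : Set (Matrix (Fin 2) (Fin 2) ℝ))
    (hXset : Xset = {X : Matrix (Fin 2) (Fin 2) ℝ | X.PosSemidef ∧ X.trace = 1}) :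
    -- (1) every feasible X is robustly optimal with robust value 1
    (∀ X ∈ Xset, IsLeast {v : ℝ | ∃ C ∈ U, v = (C * X).trace} 1)
    ∧
    -- (2) X' = ½ A Pareto dominates every other feasible solution
    (∀ μ : ℝ, μ ∈ Set.Ioc (0:ℝ) 1 → ∀ X ∈ Xset, X ≠ (1/2 : ℝ) • A →
      ((1 + μ • A) * X).trace < ((1 + μ • A) * ((1/2 : ℝ) • A)).trace) := by
  subst hA hU hXset
  constructor
  · rintro X ⟨hpsd, htr⟩
    have hsym : X 1 0 = X 0 1 := by
      have := hpsd.1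
      have h := congrFun (congrFun this 0) 1
      simpa [Matrix.conjTranspose_apply] using h
    have htr' : X 0 0 + X 1 1 = 1 := by
      rw [Matrix.trace_fin_two] at htr; linarith
    have hq1 : 0 ≤ X 0 0 - 2 * X 0 1 + X 1 1 := by
      have := hpsd.dotProduct_mulVec_nonneg ![1, -1]
      simp [dotProduct, Matrix.mulVec, Fin.sum_univ_two] at this
      linarith [this]
    constructor
    · exact ⟨1, ⟨0, ⟨le_refl 0, zero_le_one⟩, by simp⟩, by simp [htr]⟩
    · rintro v ⟨C, ⟨μ, ⟨hμ0, hμ1⟩, rfl⟩, rfl⟩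
      have : ((1 + μ • !![(1:ℝ), -1; -1, 1]) * X).trace
          = 1 + μ * (X 0 0 - 2 * X 0 1 + X 1 1) := by
        simp [Matrix.trace_fin_two, Matrix.mul_apply, Fin.sum_univ_two,
          Matrix.one_apply, Matrix.add_apply, Matrix.smul_apply, hsym]
        linarith
      rw [this]
      nlinarith [mul_nonneg hμ0 hq1]
  · rintro μ ⟨hμ0, hμ1⟩ X ⟨hpsd, htr⟩ hne
    have hsym : X 1 0 = X 0 1 := by
      have := hpsd.1
      have h := congrFun (congrFun this 0) 1
      simpa [Matrix.conjTranspose_apply] using h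
    have htr' : X 0 0 + X 1 1 = 1 := by
      rw [Matrix.trace_fin_two] at htr; linarith
    have hdet : 0 ≤ X 0 0 * X 1 1 - X 0 1 * X 0 1 := by
      have h1 := hpsd.dotProduct_mulVec_nonneg ![X 1 1, -X 0 1]
      have h2 := hpsd.dotProduct_mulVec_nonneg ![-X 0 1, X 0 0]
      simp [dotProduct, Matrix.mulVec, Fin.sum_univ_two, hsym] at h1 h2
      nlinarith [h1, h2, sq_nonneg (X 0 0 - X 1 1), sq_nonneg (X 0 0 + X 1 1)]
    have hq2 : 0 ≤ X 0 0 + 2 * X 0 1 + X 1 1 := by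
      have := hpsd.dotProduct_mulVec_nonneg ![1, 1]
      simp [dotProduct, Matrix.mulVec, Fin.sum_univ_two] at this
      linarith [this]
    -- b > -1/2 strictly
    have hb : -1/2 < X 0 1 := by
      rcases lt_or_eq_of_le (by linarith : -1/2 ≤ X 0 1) with h | h
      · exact h
      · exfalso
        apply hne
        have ha : X 0 0 = 1/2 := by nlinarith
        have hc : X 1 1 = 1/2 := by linarith
        ext i j
        fin_cases i <;> fin_cases j <;>
          simp [Matrix.smul_apply, ha, hc, ← h, hsym] <;> linarith
    have hL : ((1 + μ • !![(1:ℝ), -1; -1, 1]) * X).trace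
        = 1 + μ * (X 0 0 - 2 * X 0 1 + X 1 1) := by
      simp [Matrix.trace_fin_two, Matrix.mul_apply, Fin.sum_univ_two,
        Matrix.one_apply, Matrix.add_apply, Matrix.smul_apply, hsym]
      linarith
    have hR : ((1 + μ • !![(1:ℝ), -1; -1, 1]) * ((1/2 : ℝ) • !![(1:ℝ), -1; -1, 1])).trace
        = 1 + 2 * μ := by
      simp [Matrix.trace_fin_two, Matrix.mul_apply, Fin.sum_univ_two,
        Matrix.one_apply, Matrix.add_apply, Matrix.smul_apply]
      ring
    rw [hL, hR]
    nlinarith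
end

section
/- Let X ⊆ {0,1}^n, f(x,p) = pᵀx, U = [p̄ − Δp, p̄] with Δp ≥ 0, and let x* ∈ X be robustly optimal. For z ∈ {−1,0,1}^n with x* + z ∈ {0,1}^n, the point x* + z Pareto dominates x* if and only if: (i) x* + z is robustly optimal, (ii) every index i with z_i = −1 satisfies Δp_i = 0, and (iii) there is at least one index i with z_i = 1 and Δp_i > 0. -/
/-- For binary `X ⊆ {0,1}^n`, `f(x,p) = pᵀx`, and interval uncertainty
`U = [p̄ − Δp, p̄]`, a robustly optimal `x*` is Pareto dominated by `x* + z`,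
`z ∈ {−1,0,1}^n`, iff (i) `x*+z` is robustly optimal, (ii) `z_i = −1 ⟹ Δp_i = 0`,
and (iii) some `i` has `z_i = 1` and `Δp_i > 0`. -/
theorem interval_pareto_domination_characterization
    {n : ℕ} (pbar Δp : Fin n → ℝ) (hΔp : ∀ i, 0 ≤ Δp i)
    (U : Set (Fin n → ℝ))
    (hU : U = {u : Fin n → ℝ | ∀ i, pbar i - Δp i ≤ u i ∧ u i ≤ pbar i})
    (Xset : Set (Fin n → ℝ))
    (hbin : ∀ x ∈ Xset, ∀ i, x i = 0 ∨ x i = 1)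
    (xstar : Fin n → ℝ) (hxstar : xstar ∈ Xset)
    (hRO : ∀ x ∈ Xset, sInf {v : ℝ | ∃ p ∈ U, v = ∑ i, p i * x i}
        ≤ sInf {v : ℝ | ∃ p ∈ U, v = ∑ i, p i * xstar i})
    (z : Fin n → ℝ) (hz : ∀ i, z i = -1 ∨ z i = 0 ∨ z i = 1)
    (hmem : xstar + z ∈ Xset) :
    -- x* + z Pareto dominates x* …
    ((∀ p ∈ U, ∑ i, p i * xstar i ≤ ∑ i, p i * (xstar + z) i)
        ∧ ∃ pbar' ∈ U, ∑ i, pbar' i * xstar i < ∑ i, pbar' i * (xstar + z) i)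
    ↔
    -- … iff (i) x*+z robustly optimal, (ii) z_i = −1 ⟹ Δp_i = 0,
    -- (iii) some i has z_i = 1 and Δp_i > 0
    ((∀ x ∈ Xset, sInf {v : ℝ | ∃ p ∈ U, v = ∑ i, p i * x i}
          ≤ sInf {v : ℝ | ∃ p ∈ U, v = ∑ i, p i * (xstar + z) i})
      ∧ (∀ i, z i = -1 → Δp i = 0)
      ∧ (∃ i, z i = 1 ∧ 0 < Δp i)) := by
  classical
  set q : Fin n → ℝ := fun i => pbar i - Δp i with hqdef
  have hqi : ∀ j, q j = pbar j - Δp j := fun _ => rfl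
  have hqU : q ∈ U := by
    rw [hU]; intro i
    exact ⟨le_of_eq (hqi i).symm, by rw [hqi i]; linarith [hΔp i]⟩
  have hpbarU : pbar ∈ U := by
    rw [hU]; intro i; exact ⟨by linarith [hΔp i], le_refl _⟩
  have hinf : ∀ x : Fin n → ℝ, (∀ i, 0 ≤ x i) →
      sInf {v : ℝ | ∃ p ∈ U, v = ∑ i, p i * x i} = ∑ i, q i * x i := by
    intro x hx
    apply IsLeast.csInf_eq
    constructor
    · exact ⟨q, hqU, rfl⟩
    · rintro v ⟨p, hp, rfl⟩
      rw [hU] at hp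
      exact Finset.sum_le_sum fun i _ =>
        mul_le_mul_of_nonneg_right (hp i).1 (hx i)
  have hxnn : ∀ i, 0 ≤ xstar i := fun i => by
    rcases hbin _ hxstar i with h | h <;> rw [h] <;> norm_num
  have hynn : ∀ i, 0 ≤ (xstar + z) i := fun i => by
    rcases hbin _ hmem i with h | h <;> rw [h] <;> norm_num
  have hsplit : ∀ p : Fin n → ℝ,
      ∑ i, p i * (xstar + z) i = ∑ i, p i * xstar i + ∑ i, p i * z i := by
    intro p
    rw [← Finset.sum_add_distrib]
    exact Finset.sum_congr rfl fun i _ => by simp [mul_add]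
  have hROz : ∑ i, q i * z i ≤ 0 := by
    have h := hRO (xstar + z) hmem
    rw [hinf _ hxnn, hinf _ hynn, hsplit q] at h
    linarith
  constructor
  · rintro ⟨h1, p', hp', h2⟩
    have hS1 : 0 ≤ ∑ i, q i * z i := by
      have h := h1 q hqU; rw [hsplit q] at h; linarith
    have hS10 : ∑ i, q i * z i = 0 := le_antisymm hROz hS1
    -- (ii)
    have hii : ∀ i, z i = -1 → Δp i = 0 := by
      set r : Fin n → ℝ := fun i => if z i = -1 then pbar i else q i with hrdef
      have hri : ∀ j, r j = if z j = -1 then pbar j else q j := fun _ => rfl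
      have hrU : r ∈ U := by
        rw [hU]; intro i
        by_cases h : z i = -1
        · rw [hri i, if_pos h]; exact ⟨by linarith [hΔp i], le_refl _⟩
        · rw [hri i, if_neg h, hqi i]; exact ⟨le_refl _, by linarith [hΔp i]⟩
      have hr : 0 ≤ ∑ i, r i * z i := by
        have h := h1 r hrU; rw [hsplit r] at h; linarith
      have key : ∑ i, r i * z i
          = ∑ i, q i * z i - ∑ i, (if z i = -1 then Δp i else 0) := by
        rw [← Finset.sum_sub_distrib]
        refine Finset.sum_congr rfl fun i _ => ?_
        by_cases h : z i = -1
        · rw [hri i, if_pos h, if_pos h, hqi i, h]; ring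
        · rw [hri i, if_neg h, if_neg h]; ring
      have hsumΔ : ∑ i, (if z i = -1 then Δp i else 0) = 0 := by
        have hle : ∑ i, (if z i = -1 then Δp i else 0) ≤ 0 := by
          rw [key, hS10] at hr; linarith
        have hge : 0 ≤ ∑ i, (if z i = -1 then Δp i else 0) :=
          Finset.sum_nonneg fun i _ => by
            by_cases h : z i = -1 <;> simp [h, hΔp i]
        linarith
      intro i hzi
      have hall := (Finset.sum_eq_zero_iff_of_nonneg
        (fun i _ => by by_cases h : z i = -1 <;> simp [h, hΔp i])).mp hsumΔ i
        (Finset.mem_univ i)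
      simpa [hzi] using hall
    -- (iii)
    have h2' : 0 < ∑ i, p' i * z i := by rw [hsplit p'] at h2; linarith
    rw [hU] at hp'
    have bound : ∑ i, p' i * z i
        ≤ ∑ i, (q i * z i + (if z i = 1 then Δp i else 0)) := by
      refine Finset.sum_le_sum fun i _ => ?_
      rcases hz i with h | h | h <;> rw [h]
      · rw [if_neg (by norm_num)]; have := (hp' i).1; rw [← hqi i] at this
        nlinarith
      · rw [if_neg (by norm_num)]; simp
      · rw [if_pos rfl]; have := (hp' i).2
        have hq := hqi i; nlinarith
    have hIII : 0 < ∑ i, (if z i = 1 then Δp i else 0) := by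
      rw [Finset.sum_add_distrib, hS10] at bound
      linarith
    have hex : ∃ i, z i = 1 ∧ 0 < Δp i := by
      by_contra hc
      push_neg at hc
      have : ∑ i, (if z i = 1 then Δp i else 0) ≤ 0 :=
        Finset.sum_nonpos fun i _ => by
          by_cases h : z i = 1
          · simpa [h] using le_of_not_gt (fun hlt => absurd hlt (not_lt.mpr (hc i h)))
          · simp [h]
      linarith
    refine ⟨?_, hii, hex⟩
    intro x hx
    have hxnn' : ∀ i, 0 ≤ x i := fun i => by
      rcases hbin _ hx i with h | h <;> rw [h] <;> norm_num
    have h := hRO x hx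
    rw [hinf _ hxnn', hinf _ hxnn] at h
    rw [hinf _ hxnn', hinf _ hynn, hsplit q, hS10]
    linarith
  · rintro ⟨hi, hii, i0, hz1, hΔ0⟩
    have hS1 : 0 ≤ ∑ i, q i * z i := by
      have h := hi xstar hxstar
      rw [hinf _ hxnn, hinf _ hynn, hsplit q] at h
      linarith
    constructor
    · intro p hp
      rw [hU] at hp
      rw [hsplit p]
      have hge : ∑ i, q i * z i ≤ ∑ i, p i * z i := by
        refine Finset.sum_le_sum fun i _ => ?_
        rcases hz i with h | h | h <;> rw [h]
        · have h0 := hii i h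
          have := (hp i).2
          have hq := hqi i; nlinarith
        · simp
        · have := (hp i).1; rw [← hqi i] at this; nlinarith
      linarith
    · refine ⟨pbar, hpbarU, ?_⟩
      rw [hsplit pbar]
      have hlt : ∑ i, q i * z i < ∑ i, pbar i * z i := by
        refine Finset.sum_lt_sum (fun i _ => ?_) ⟨i0, Finset.mem_univ i0, ?_⟩
        · rcases hz i with h | h | h <;> rw [h]
          · have h0 := hii i h; have hq := hqi i; nlinarith
          · simp
          · have hq := hqi i; nlinarith [hΔp i]
        · rw [hz1]; have hq := hqi i0; nlinarith
      linarith
end
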